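/- Let Δ be a monotone, or-decomposable NNF formula over discrete variables, and define rob(Δ) recursively: rob(true) = ∞, rob(false) = 0, rob(literal) = 1, rob(α ∧ β) = min(rob(α), rob(β)), rob(α ∨ β) = rob(α) + rob(β). Then rob(Δ) equals the minimum number of variables in any prime implicate of Δ (and ∞ if Δ is valid, 0 if Δ is unsatisfiable). -/

import Mathlib

/-- NNF formulas over discrete variables `V` with state spaces `S v`:
true, false, literals (sets of states of a variable), conjunction and disjunction. -/
inductive NNF (V : Type) (S : V → Type) : Type
  | tru : NNF V S
  | fls : NNF V S
  | lit : (X : V) → Set (S X) → NNF V S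
  | conj : NNF V S → NNF V S → NNF V S
  | disj : NNF V S → NNF V S → NNF V S

namespace NNF

variable {V : Type} {S : V → Type}

def sat : NNF V S → (∀ v, S v) → Prop
  | tru, _ => True
  | fls, _ => False
  | lit X s, w => w X ∈ s
  | conj a b, w => a.sat w ∧ b.sat w
  | disj a b, w => a.sat w ∨ b.sat w

def vars : NNF V S → Set V
  | tru => ∅
  | fls => ∅
  | lit X _ => {X}
  | conj a b => a.vars ∪ b.vars
  | disj a b => a.vars ∪ b.vars

def lits : NNF V S → Set (Σ X : V, Set (S X))
  | tru => ∅
  | fls => ∅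
  | lit X s => {⟨X, s⟩}
  | conj a b => a.lits ∪ b.lits
  | disj a b => a.lits ∪ b.lits

/-- Monotone: for each variable `X`, all `X`-literals appearing are simple
(single-state) and equal to each other. -/
def IsMonotone (Δ : NNF V S) : Prop :=
  ∀ (X : V) (s : Set (S X)), (⟨X, s⟩ : Σ X : V, Set (S X)) ∈ Δ.lits →
    (∃ a : S X, s = {a}) ∧ ∀ s' : Set (S X), (⟨X, s'⟩ : Σ X : V, Set (S X)) ∈ Δ.lits → s' = s

/-- Or-decomposable: the disjuncts of every disjunction share no variables. -/
def IsDecomposable : NNF V S → Prop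
  | tru => True
  | fls => True
  | lit _ _ => True
  | conj a b => a.IsDecomposable ∧ b.IsDecomposable
  | disj a b => a.IsDecomposable ∧ b.IsDecomposable ∧ a.vars ∩ b.vars = ∅

/-- `rob(true) = ∞`, `rob(false) = 0`, `rob(literal) = 1`,
`rob(α ∧ β) = min(rob α, rob β)`, `rob(α ∨ β) = rob α + rob β`. -/
noncomputable def rob : NNF V S → ℕ∞
  | tru => ⊤
  | fls => 0
  | lit _ _ => 1
  | conj a b => min a.rob b.rob
  | disj a b => a.rob + b.rob

end NNF

/-- A clause over discrete variables: for each variable, a set of its states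
(empty = variable not mentioned); the clause is the disjunction of its literals. -/
def Clause (V : Type) (S : V → Type) : Type := ∀ v, Set (S v)

def csat {V : Type} {S : V → Type} (c : Clause V S) (w : ∀ v, S v) : Prop := ∃ v, w v ∈ c v

def cvars {V : Type} {S : V → Type} (c : Clause V S) : Set V := {v | c v ≠ ∅}

def cvalid {V : Type} {S : V → Type} (c : Clause V S) : Prop := ∀ w : ∀ v, S v, csat c w

/-- An implicate of `Δ`: a non-valid clause entailed by `Δ`. -/
def Implicate {V : Type} {S : V → Type} (Δ : NNF V S) (c : Clause V S) : Prop :=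
  ¬ cvalid c ∧ ∀ w : ∀ v, S v, Δ.sat w → csat c w

/-- A prime implicate: an implicate not strictly entailed by any other implicate. -/
def PrimeImplicate {V : Type} {S : V → Type} (Δ : NNF V S) (c : Clause V S) : Prop :=
  Implicate Δ c ∧ ∀ c' : Clause V S, Implicate Δ c' →
    (∀ w : ∀ v, S v, csat c' w → csat c w) → (∀ w : ∀ v, S v, csat c w → csat c' w)

namespace NNF

variable {V : Type} {S : V → Type}

lemma vars_finite (Δ : NNF V S) : Δ.vars.Finite := by
  induction Δ with
  | tru => exact Set.finite_empty
  | fls => exact Set.finite_empty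
  | lit X s => exact Set.finite_singleton X
  | conj a b iha ihb => exact iha.union ihb
  | disj a b iha ihb => exact iha.union ihb

lemma sat_congr (Δ : NNF V S) {w w' : ∀ v, S v}
    (h : ∀ v ∈ Δ.vars, w v = w' v) : Δ.sat w ↔ Δ.sat w' := by
  induction Δ with
  | tru => exact Iff.rfl
  | fls => exact Iff.rfl
  | lit X s =>
      simp only [sat]
      rw [h X (by simp [vars])]
  | conj a b iha ihb =>
      simp only [sat]
      rw [iha fun v hv => h v (Set.mem_union_left _ hv),
          ihb fun v hv => h v (Set.mem_union_right _ hv)]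
  | disj a b iha ihb =>
      simp only [sat]
      rw [iha fun v hv => h v (Set.mem_union_left _ hv),
          ihb fun v hv => h v (Set.mem_union_right _ hv)]

lemma exists_lit_of_mem_vars (Δ : NNF V S) {X : V} (h : X ∈ Δ.vars) :
    ∃ s, (⟨X, s⟩ : Σ X : V, Set (S X)) ∈ Δ.lits := by
  induction Δ with
  | tru => simp [vars] at h
  | fls => simp [vars] at h
  | lit Y s =>
      simp only [vars, Set.mem_singleton_iff] at h
      subst h
      exact ⟨s, by simp [lits]⟩
  | conj a b iha ihb =>
      rcases h with h | h
      · obtain ⟨s, hs⟩ := iha h; exact ⟨s, Set.mem_union_left _ hs⟩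
      · obtain ⟨s, hs⟩ := ihb h; exact ⟨s, Set.mem_union_right _ hs⟩
  | disj a b iha ihb =>
      rcases h with h | h
      · obtain ⟨s, hs⟩ := iha h; exact ⟨s, Set.mem_union_left _ hs⟩
      · obtain ⟨s, hs⟩ := ihb h; exact ⟨s, Set.mem_union_right _ hs⟩

/-- Lemma A: if `w` falsifies `Δ`, then `rob Δ` is at most the number of
variables of `Δ` on which `w` deviates from the canonical assignment `a`. -/
lemma rob_le_of_not_sat (a : ∀ v, S v) (Δ : NNF V S)
    (hA : ∀ X s, (⟨X, s⟩ : Σ X : V, Set (S X)) ∈ Δ.lits → s = {a X})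
    (hdec : Δ.IsDecomposable) (w : ∀ v, S v) (hw : ¬ Δ.sat w) :
    Δ.rob ≤ (({v ∈ Δ.vars | w v ≠ a v}).ncard : ℕ∞) := by
  induction Δ with
  | tru => exact absurd trivial hw
  | fls => exact zero_le
  | lit X s =>
      have hs : s = {a X} := hA X s (by simp [lits])
      have hx : w X ≠ a X := by
        intro h; exact hw (by simp [sat, hs, h])
      have : {v | v ∈ (NNF.lit X s).vars ∧ w v ≠ a v} = {X} := by
        ext v
        simp only [vars, Set.mem_setOf_eq, Set.mem_singleton_iff]
        constructor
        · rintro ⟨hv, _⟩; exact hv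
        · rintro rfl; exact ⟨rfl, hx⟩
      rw [this]
      simp [rob]
  | conj a' b iha ihb =>
      simp only [sat, not_and_or] at hw
      have hsub : ∀ (c : NNF V S), c.vars ⊆ (NNF.conj a' b).vars →
          ({v ∈ c.vars | w v ≠ a v}).ncard ≤ ({v ∈ (NNF.conj a' b).vars | w v ≠ a v}).ncard := by
        intro c hc
        apply Set.ncard_le_ncard
        · intro v hv; exact ⟨hc hv.1, hv.2⟩
        · exact ((vars_finite _).subset (Set.sep_subset _ _))
      rcases hw with hw | hw
      · calc (NNF.conj a' b).rob ≤ a'.rob := min_le_left _ _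
          _ ≤ _ := iha (fun X s hs => hA X s (Set.mem_union_left _ hs)) hdec.1 hw
          _ ≤ _ := by exact_mod_cast hsub a' (Set.subset_union_left)
      · calc (NNF.conj a' b).rob ≤ b.rob := min_le_right _ _
          _ ≤ _ := ihb (fun X s hs => hA X s (Set.mem_union_right _ hs)) hdec.2 hw
          _ ≤ _ := by exact_mod_cast hsub b (Set.subset_union_right)
  | disj a' b iha ihb =>
      simp only [sat, not_or] at hw
      have h1 := iha (fun X s hs => hA X s (Set.mem_union_left _ hs)) hdec.1 hw.1
      have h2 := ihb (fun X s hs => hA X s (Set.mem_union_right _ hs)) hdec.2.1 hw.2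
      have hdisj : Disjoint {v ∈ a'.vars | w v ≠ a v} {v ∈ b.vars | w v ≠ a v} := by
        rw [Set.disjoint_iff_inter_eq_empty]
        have := hdec.2.2
        ext v
        simp only [Set.mem_inter_iff, Set.mem_setOf_eq, Set.mem_empty_iff_false, iff_false]
        rintro ⟨⟨h1', _⟩, ⟨h2', _⟩⟩
        exact absurd (Set.mem_inter h1' h2' : v ∈ a'.vars ∩ b.vars) (by rw [this]; exact id)
      have hunion : {v ∈ (NNF.disj a' b).vars | w v ≠ a v}
          = {v ∈ a'.vars | w v ≠ a v} ∪ {v ∈ b.vars | w v ≠ a v} := by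
        ext v
        simp only [vars, Set.mem_union, Set.mem_setOf_eq]
        tauto
      have hcard : ({v ∈ (NNF.disj a' b).vars | w v ≠ a v}).ncard
          = ({v ∈ a'.vars | w v ≠ a v}).ncard + ({v ∈ b.vars | w v ≠ a v}).ncard := by
        rw [hunion]
        exact Set.ncard_union_eq hdisj
          ((vars_finite a').subset (Set.sep_subset _ _))
          ((vars_finite b).subset (Set.sep_subset _ _))
      calc (NNF.disj a' b).rob = a'.rob + b.rob := rfl
        _ ≤ _ + _ := add_le_add h1 h2
        _ = _ := by rw [hcard]; push_cast; ring
/-- Lemma B: either `rob Δ = ⊤`, or there is a finite set `I` of variables of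
size at most `rob Δ` such that deviating from `a` on all of `I` falsifies `Δ`. -/
lemma rob_witness (a : ∀ v, S v) (Δ : NNF V S)
    (hA : ∀ X s, (⟨X, s⟩ : Σ X : V, Set (S X)) ∈ Δ.lits → s = {a X}) :
    Δ.rob = ⊤ ∨ ∃ I : Set V, I ⊆ Δ.vars ∧ I.Finite ∧ (I.ncard : ℕ∞) ≤ Δ.rob ∧
      ∀ w : ∀ v, S v, (∀ v ∈ I, w v ≠ a v) → ¬ Δ.sat w := by
  induction Δ with
  | tru => exact Or.inl rfl
  | fls =>
      refine Or.inr ⟨∅, by simp, Set.finite_empty, by simp, ?_⟩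
      intro w _ hs; exact hs
  | lit X s =>
      refine Or.inr ⟨{X}, subset_refl _, Set.finite_singleton X, by simp [rob], ?_⟩
      intro w hw hs
      have hsX : s = {a X} := hA X s (by simp [lits])
      have : w X ∈ s := hs
      rw [hsX] at this
      exact hw X rfl this
  | conj a' b iha ihb =>
      have hAa : ∀ X s, (⟨X, s⟩ : Σ X : V, Set (S X)) ∈ a'.lits → s = {a X} :=
        fun X s hs => hA X s (Set.mem_union_left _ hs)
      have hAb : ∀ X s, (⟨X, s⟩ : Σ X : V, Set (S X)) ∈ b.lits → s = {a X} :=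
        fun X s hs => hA X s (Set.mem_union_right _ hs)
      rcases le_total a'.rob b.rob with hle | hle
      · rcases iha hAa with htop | ⟨I, hIv, hIf, hIc, hIP⟩
        · rcases ihb hAb with htop' | ⟨I, hIv, hIf, hIc, hIP⟩
          · left; show min _ _ = ⊤; rw [htop, htop']; simp
          · refine Or.inr ⟨I, hIv.trans Set.subset_union_right, hIf, ?_, ?_⟩
            · show _ ≤ min _ _
              rw [htop]; simpa using hIc
            · intro w hw hs; exact hIP w hw hs.2
        · refine Or.inr ⟨I, hIv.trans Set.subset_union_left, hIf, ?_, ?_⟩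
          · show _ ≤ min _ _
            rw [min_eq_left hle]; exact hIc
          · intro w hw hs; exact hIP w hw hs.1
      · rcases ihb hAb with htop | ⟨I, hIv, hIf, hIc, hIP⟩
        · rcases iha hAa with htop' | ⟨I, hIv, hIf, hIc, hIP⟩
          · left; show min _ _ = ⊤; rw [htop, htop']; simp
          · refine Or.inr ⟨I, hIv.trans Set.subset_union_left, hIf, ?_, ?_⟩
            · show _ ≤ min _ _
              rw [htop]; simpa using hIc
            · intro w hw hs; exact hIP w hw hs.1
        · refine Or.inr ⟨I, hIv.trans Set.subset_union_right, hIf, ?_, ?_⟩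
          · show _ ≤ min _ _
            rw [min_eq_right hle]; exact hIc
          · intro w hw hs; exact hIP w hw hs.2
  | disj a' b iha ihb =>
      have hAa : ∀ X s, (⟨X, s⟩ : Σ X : V, Set (S X)) ∈ a'.lits → s = {a X} :=
        fun X s hs => hA X s (Set.mem_union_left _ hs)
      have hAb : ∀ X s, (⟨X, s⟩ : Σ X : V, Set (S X)) ∈ b.lits → s = {a X} :=
        fun X s hs => hA X s (Set.mem_union_right _ hs)
      rcases iha hAa with htop | ⟨I1, hI1v, hI1f, hI1c, hI1P⟩
      · left; show a'.rob + b.rob = ⊤; rw [htop]; simp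
      rcases ihb hAb with htop | ⟨I2, hI2v, hI2f, hI2c, hI2P⟩
      · left; show a'.rob + b.rob = ⊤; rw [htop]; simp
      refine Or.inr ⟨I1 ∪ I2, Set.union_subset_union hI1v hI2v, hI1f.union hI2f, ?_, ?_⟩
      · calc ((I1 ∪ I2).ncard : ℕ∞) ≤ ((I1.ncard + I2.ncard : ℕ) : ℕ∞) := by
              exact_mod_cast Set.ncard_union_le I1 I2
          _ = (I1.ncard : ℕ∞) + (I2.ncard : ℕ∞) := by push_cast; ring
          _ ≤ a'.rob + b.rob := add_le_add hI1c hI2c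
      · intro w hw hs
        rcases hs with hs | hs
        · exact hI1P w (fun v hv => hw v (Set.mem_union_left _ hv)) hs
        · exact hI2P w (fun v hv => hw v (Set.mem_union_right _ hv)) hs
end NNF
/-- For a monotone, or-decomposable NNF `Δ` (with well-formed literals),
`rob Δ` equals the minimum number of variables in any prime implicate of `Δ`
(`∞`, i.e. the empty infimum, if `Δ` is valid; `0` if `Δ` is unsatisfiable). -/
theorem stmt6 {V : Type} {S : V → Type} [∀ v, Nonempty (S v)]
    (Δ : NNF V S)
    (hwf : ∀ p : Σ X : V, Set (S X), p ∈ Δ.lits → p.2 ≠ ∅ ∧ p.2 ≠ Set.univ)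
    (hmono : Δ.IsMonotone) (hdec : Δ.IsDecomposable) :
    Δ.rob = ⨅ (c : Clause V S) (_ : PrimeImplicate Δ c), ((cvars c).ncard : ℕ∞) := by
  classical
  -- canonical assignment `a`
  have key : ∀ X : V, ∃ aX : S X, ∀ s, (⟨X, s⟩ : Σ X : V, Set (S X)) ∈ Δ.lits → s = {aX} := by
    intro X
    by_cases h : ∃ s, (⟨X, s⟩ : Σ X : V, Set (S X)) ∈ Δ.lits
    · obtain ⟨s, hs⟩ := h
      obtain ⟨⟨aX, haX⟩, huniq⟩ := hmono X s hs
      exact ⟨aX, fun s' hs' => by rw [huniq s' hs', haX]⟩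
    · exact ⟨Classical.arbitrary _, fun s hs => absurd ⟨s, hs⟩ h⟩
  choose a hA using key
  -- deviant assignment `b`
  have keyb : ∀ X : V, ∃ y : S X, X ∈ Δ.vars → y ≠ a X := by
    intro X
    by_cases h : X ∈ Δ.vars
    · obtain ⟨s, hs⟩ := Δ.exists_lit_of_mem_vars h
      have hne : s ≠ Set.univ := (hwf ⟨X, s⟩ hs).2
      rw [hA X s hs] at hne
      obtain ⟨y, hy⟩ := (Set.ne_univ_iff_exists_notMem _).mp hne
      exact ⟨y, fun _ => by simpa using hy⟩
    · exact ⟨Classical.arbitrary _, fun h' => absurd h' h⟩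
  choose b hb using keyb
  apply le_antisymm
  · -- rob ≤ inf : every prime implicate has at least `rob Δ` variables
    refine le_iInf fun c => le_iInf fun hc => ?_
    obtain ⟨⟨hnv, hent⟩, hprime⟩ := hc
    have hex : ∃ w0 : ∀ v, S v, ∀ v, w0 v ∉ c v := by
      by_contra h
      push_neg at h
      exact hnv fun w => h w
    obtain ⟨w0, hw0⟩ := hex
    have hproper : ∀ v, c v ≠ Set.univ := by
      intro v hv
      exact hnv fun w => ⟨v, by rw [hv]; trivial⟩
    -- prime implicates only mention variables of Δ
    have hsub : cvars c ⊆ Δ.vars := by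
      intro Y hY
      by_contra hYv
      obtain ⟨y, hy⟩ := (Set.ne_univ_iff_exists_notMem _).mp (hproper Y)
      set c' : Clause V S := fun v => if v = Y then ∅ else c v with hc'
      have hc'sub : ∀ v, c' v ⊆ c v := by
        intro v
        by_cases h : v = Y
        · subst h; simp [hc']
        · simp [hc', h]
      have himp' : Implicate Δ c' := by
        constructor
        · intro hval
          obtain ⟨v, hv⟩ := hval w0
          exact hw0 v (hc'sub v hv)
        · intro w hw
          have hagree : ∀ v ∈ Δ.vars, w v = Function.update w Y y v := by
            intro v hv
            rw [Function.update_of_ne (by rintro rfl; exact hYv hv)]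
          have hw' : Δ.sat (Function.update w Y y) := (NNF.sat_congr Δ hagree).mp hw
          obtain ⟨v, hv⟩ := hent _ hw'
          have hvY : v ≠ Y := by
            rintro rfl
            rw [Function.update_self] at hv
            exact hy hv
          rw [Function.update_of_ne hvY] at hv
          exact ⟨v, by simp [hc', hvY, hv]⟩
      have hrev := hprime c' himp' (fun w hw => by
        obtain ⟨v, hv⟩ := hw; exact ⟨v, hc'sub v hv⟩)
      obtain ⟨x, hx⟩ := Set.nonempty_iff_ne_empty.mpr hY
      obtain ⟨v, hv⟩ := hrev (Function.update w0 Y x) ⟨Y, by rw [Function.update_self]; exact hx⟩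
      have hvY : v ≠ Y := by
        rintro rfl
        simp [hc'] at hv
      rw [Function.update_of_ne hvY] at hv
      exact hw0 v (hc'sub v hv)
    -- the assignment agreeing with a off cvars c and with w0 on cvars c falsifies Δ
    have hnots : ¬ Δ.sat (fun v => if c v = ∅ then a v else w0 v) := by
      intro hs
      obtain ⟨v, hv⟩ := hent _ hs
      simp only at hv
      by_cases h : c v = ∅
      · rw [if_pos h, h] at hv; exact hv
      · rw [if_neg h] at hv; exact hw0 v hv
    have hkey := NNF.rob_le_of_not_sat a Δ hA hdec _ hnots
    refine hkey.trans ?_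
    have hfin : (cvars c).Finite := (Δ.vars_finite).subset hsub
    have hsubset : {v ∈ Δ.vars | (if c v = ∅ then a v else w0 v) ≠ a v} ⊆ cvars c := by
      intro v hv
      by_contra h
      have hcv : c v = ∅ := not_not.mp h
      exact hv.2 (by rw [if_pos hcv])
    exact_mod_cast Set.ncard_le_ncard hsubset hfin
  · -- inf ≤ rob : there is a prime implicate with `rob Δ` variables
    rcases NNF.rob_witness a Δ hA with htop | ⟨I0, hI0v, hI0f, hI0c, hI0P⟩
    · rw [htop]; exact le_top
    set P : Set V → Prop := fun I => I ⊆ Δ.vars ∧ I.Finite ∧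
      ∀ w : ∀ v, S v, (∀ v ∈ I, w v ≠ a v) → ¬ Δ.sat w with hPdef
    have hQ : ∃ n : ℕ, ∃ I : Set V, P I ∧ I.ncard = n := ⟨I0.ncard, I0, ⟨hI0v, hI0f, hI0P⟩, rfl⟩
    obtain ⟨I, hPI, hIn⟩ := Nat.find_spec hQ
    have hminI : ∀ I' : Set V, P I' → Nat.find hQ ≤ I'.ncard :=
      fun I' hI' => Nat.find_le ⟨I', hI', rfl⟩
    have hnle : Nat.find hQ ≤ I0.ncard := Nat.find_le ⟨I0, ⟨hI0v, hI0f, hI0P⟩, rfl⟩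
    set C : Clause V S := fun v => if v ∈ I then {a v} else ∅ with hC
    have hbC : ∀ v, b v ∉ C v := by
      intro v
      by_cases h : v ∈ I
      · simp only [hC, if_pos h, Set.mem_singleton_iff]
        exact hb v (hPI.1 h)
      · simp [hC, if_neg h]
    have hCvars : cvars C = I := by
      ext v
      simp only [cvars, Set.mem_setOf_eq, hC]
      by_cases h : v ∈ I <;> simp [h]
    have himpC : Implicate Δ C := by
      constructor
      · intro hval
        obtain ⟨v, hv⟩ := hval b
        exact hbC v hv
      · intro w hw
        by_contra hcs
        refine hPI.2.2 w ?_ hw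
        intro v hv hva
        exact hcs ⟨v, by simp [hC, if_pos hv, hva]⟩
    have hprimeC : PrimeImplicate Δ C := by
      refine ⟨himpC, ?_⟩
      intro c' himp' hent'
      have hsub' : ∀ v, c' v ⊆ C v := by
        intro v x hx
        obtain ⟨u, hu⟩ := hent' (Function.update b v x) ⟨v, by rw [Function.update_self]; exact hx⟩
        by_cases h : u = v
        · subst h; rwa [Function.update_self] at hu
        · rw [Function.update_of_ne h] at hu
          exact absurd hu (hbC u)
      have hI' : cvars c' ⊆ I := by
        intro v hv
        by_contra h
        have hCv : C v = ∅ := by simp [hC, h]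
        exact hv (Set.subset_empty_iff.mp (hCv ▸ hsub' v))
      have hPI' : P (cvars c') := by
        refine ⟨hI'.trans hPI.1, hPI.2.1.subset hI', ?_⟩
        intro w hwv hws
        obtain ⟨v, hv⟩ := himp'.2 w hws
        have hvc : v ∈ cvars c' := Set.nonempty_iff_ne_empty.mp ⟨_, hv⟩
        have hmem : w v ∈ C v := hsub' v hv
        simp only [hC] at hmem
        rw [if_pos (hI' hvc)] at hmem
        exact hwv v hvc hmem
      have heq : cvars c' = I := Set.eq_of_subset_of_ncard_le hI'
        (by rw [hIn]; exact hminI _ hPI') hPI.2.1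
      intro w hw
      obtain ⟨v, hv⟩ := hw
      have hvI : v ∈ I := by
        by_contra h
        simp [hC, h] at hv
      have hvc' : v ∈ cvars c' := heq ▸ hvI
      obtain ⟨x, hx⟩ := Set.nonempty_iff_ne_empty.mpr hvc'
      have hxC : x ∈ C v := hsub' v hx
      simp only [hC] at hxC; rw [if_pos hvI] at hxC
      have hwv : w v = a v := by
        simp only [hC] at hv; rw [if_pos hvI] at hv; exact hv
      exact ⟨v, by rw [hwv, ← hxC]; exact hx⟩
    calc (⨅ (c : Clause V S) (_ : PrimeImplicate Δ c), ((cvars c).ncard : ℕ∞))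
        ≤ ((cvars C).ncard : ℕ∞) := iInf₂_le C hprimeC
      _ = ((Nat.find hQ : ℕ) : ℕ∞) := by rw [hCvars, hIn]
      _ ≤ (I0.ncard : ℕ∞) := by exact_mod_cast hnle
      _ ≤ Δ.rob := hI0c
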